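/- Let 1 ≤ l < k ≤ n and λ ∈ Γ_k. Then for every index 1 ≤ i ≤ n, σ_l(λ)σ_{k−1;i}(λ) − σ_k(λ)σ_{l−1;i}(λ) = σ_{l;i}(λ)σ_{k−1;i}(λ) − σ_{k;i}(λ)σ_{l−1;i}(λ) ≥ (n(k−l)/(k(n−l))) · σ_{l;i}(λ)σ_{k−1;i}(λ). Equivalently, the partial derivative ∂/∂λ_i of the quotient σ_k/σ_l at λ is at least (n(k−l)/(k(n−l))) σ_{l;i}(λ)σ_{k−1;i}(λ)/σ_l(λ)². -/

import Mathlib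

open Finset Polynomial

/-- The `k`-th elementary symmetric polynomial of `x ∈ ℝⁿ`. -/
noncomputable def esymmR (n k : ℕ) (x : Fin n → ℝ) : ℝ :=
  ∑ s ∈ Finset.univ.powersetCard k, ∏ i ∈ s, x i

/-- The Gårding cone `Γ_k ⊆ ℝⁿ`. -/
def GardingCone (n k : ℕ) : Set (Fin n → ℝ) :=
  {x | ∀ j : ℕ, 1 ≤ j → j ≤ k → 0 < esymmR n j x}


lemma esymm_nil (k : ℕ) : (0 : Multiset ℝ).esymm (k+1) = 0 := by
  rw [Multiset.esymm, Multiset.powersetCard_eq_empty (k+1) (by simpa using Nat.succ_pos k)]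
  simp

lemma esymm_zero' (s : Multiset ℝ) : s.esymm 0 = 1 := by
  simp [Multiset.esymm, Multiset.powersetCard_zero_left]

lemma esymm_singleton (b : ℝ) : ({b} : Multiset ℝ).esymm 1 = b := by
  have : ({b} : Multiset ℝ) = b ::ₘ 0 := rfl
  rw [this, show (1:ℕ) = 0 + 1 from rfl]
  rw [Multiset.esymm, Multiset.powersetCard_cons]
  simp [Multiset.powersetCard_zero_left, Multiset.powersetCard_zero_right]

lemma esymm_cons (a : ℝ) (s : Multiset ℝ) (k : ℕ) :
    (a ::ₘ s).esymm (k+1) = s.esymm (k+1) + a * s.esymm k := by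
  rw [Multiset.esymm, Multiset.powersetCard_cons, Multiset.map_add, Multiset.sum_add,
    Multiset.map_map]
  congr 1
  rw [Multiset.esymm, ← Multiset.sum_map_mul_left]
  congr 1
  ext t
  simp [Multiset.prod_cons]

lemma newton_base : ∀ (e : ℕ) (s : Multiset ℝ), Multiset.card s = e + 2 →
    2 * ((e:ℝ)+2) * (s.esymm (e+2) * s.esymm e) ≤ ((e:ℝ)+1) * (s.esymm (e+1))^2 := by
  intro e
  induction e with
  | zero =>
    intro s hs
    obtain ⟨a, b, rfl⟩ := Multiset.card_eq_two.1 hs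
    have h1 : ({a, b} : Multiset ℝ) = a ::ₘ b ::ₘ 0 := rfl
    rw [h1]
    have e2 : (a ::ₘ b ::ₘ (0:Multiset ℝ)).esymm 2 = a * b := by
      rw [show (2:ℕ) = 1 + 1 from rfl, esymm_cons, esymm_cons]
      simp [esymm_nil, esymm_zero', esymm_singleton]
    have e1 : (a ::ₘ b ::ₘ (0:Multiset ℝ)).esymm 1 = b + a := by
      rw [show (1:ℕ) = 0 + 1 from rfl, esymm_cons]
      simp [esymm_zero', esymm_singleton]
    rw [e2, e1, esymm_zero']
    push_cast
    nlinarith [sq_nonneg (a - b)]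
  | succ e ih =>
    intro s hs
    have hpos : 0 < Multiset.card s := by omega
    obtain ⟨a, ha⟩ := Multiset.card_pos_iff_exists_mem.1 hpos
    obtain ⟨t, rfl⟩ := Multiset.exists_cons_of_mem ha
    have ht : Multiset.card t = e + 2 := by
      rw [Multiset.card_cons] at hs; omega
    have htop : t.esymm (e + 3) = 0 := by
      rw [Multiset.esymm]
      rw [Multiset.powersetCard_eq_empty (e+3) (by omega)]
      simp
    have h3 : (a ::ₘ t).esymm (e+1+2) = a * t.esymm (e+2) := by
      rw [show e+1+2 = (e+2)+1 from rfl, esymm_cons, htop]; ring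
    have h2 : (a ::ₘ t).esymm (e+1+1) = t.esymm (e+2) + a * t.esymm (e+1) := by
      rw [show e+1+1 = (e+1)+1 from rfl, esymm_cons]
    have h1 : (a ::ₘ t).esymm (e+1) = t.esymm (e+1) + a * t.esymm e := by
      rw [show e+1 = e+1 from rfl, esymm_cons]
    rw [h3, h2, h1]
    have IH := ih t ht
    set E2 := t.esymm (e+2)
    set E1 := t.esymm (e+1)
    set E0 := t.esymm e
    have key : 0 ≤ a^2 * (((e:ℝ)+1) * E1^2 - 2*((e:ℝ)+2) * (E2 * E0)) :=
      mul_nonneg (sq_nonneg a) (by linarith)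
    push_cast
    nlinarith [sq_nonneg (((e:ℝ)+2)*E2 - a*E1), key]

lemma natDeg_deriv (p : ℝ[X]) (hd : 1 ≤ p.natDegree) :
    (derivative p).natDegree = p.natDegree - 1 := by
  have hp : p ≠ 0 := fun h => by simp [h] at hd
  refine le_antisymm (natDegree_derivative_le p) (le_natDegree_of_ne_zero ?_)
  rw [coeff_derivative]
  have h1 : p.natDegree - 1 + 1 = p.natDegree := by omega
  rw [h1]
  have h2 : p.coeff p.natDegree ≠ 0 := by
    rw [coeff_natDegree]; exact leadingCoeff_ne_zero.2 hp
  have h3 : ((p.natDegree - 1 : ℕ) : ℝ) + 1 ≠ 0 := by positivity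
  exact mul_ne_zero h2 h3

lemma rr_deriv (p : ℝ[X]) (hd : 1 ≤ p.natDegree)
    (h : Multiset.card p.roots = p.natDegree) :
    Multiset.card (derivative p).roots = (derivative p).natDegree := by
  refine le_antisymm (derivative p).card_roots' ?_
  have := p.card_roots_le_derivative
  rw [natDeg_deriv p hd]
  omega

lemma rr_iter (p : ℝ[X]) (h : Multiset.card p.roots = p.natDegree) :
    ∀ s, s ≤ p.natDegree →
      (derivative^[s] p).natDegree = p.natDegree - s ∧
        Multiset.card (derivative^[s] p).roots = p.natDegree - s := by
  intro s
  induction s with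
  | zero => intro _; exact ⟨by simp, by simpa using h⟩
  | succ s ih =>
    intro hs
    obtain ⟨hdeg, hroots⟩ := ih (by omega)
    have hd1 : 1 ≤ (derivative^[s] p).natDegree := by omega
    constructor
    · rw [Function.iterate_succ_apply', natDeg_deriv _ hd1, hdeg]
      omega
    · rw [Function.iterate_succ_apply', rr_deriv _ hd1 (by rw [hroots, hdeg]),
        natDeg_deriv _ hd1, hdeg]
      omega

lemma newton_ineq {ι : Type*} [DecidableEq ι] (A : Finset ι) (x : ι → ℝ) (j : ℕ)
    (h1 : 1 ≤ j) (h2 : j + 1 ≤ A.card) :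
    ((j:ℝ)+1) * ((A.card:ℝ) - (j:ℝ) + 1) *
      ((∑ s ∈ A.powersetCard (j+1), ∏ i ∈ s, x i) * (∑ s ∈ A.powersetCard (j-1), ∏ i ∈ s, x i))
      ≤ (j:ℝ) * ((A.card:ℝ) - (j:ℝ)) * (∑ s ∈ A.powersetCard j, ∏ i ∈ s, x i)^2 := by
  classical
  set m := A.card with hm
  set N := m - j with hN
  have hN1 : 1 ≤ N := by omega
  set p : ℝ[X] := ∏ i ∈ A, (X + C (x i)) with hp
  have hmonic : p.Monic := monic_prod_of_monic _ _ fun i _ => monic_X_add_C (x i)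
  have hpne : p ≠ 0 := hmonic.ne_zero
  have hdeg : p.natDegree = m := by
    rw [hp, natDegree_prod_of_monic _ _ fun i _ => monic_X_add_C (x i)]
    simp [natDegree_X_add_C, hm]
  have hcard1 : ∀ a : ℝ, Multiset.card (X + C a).roots = 1 := by
    intro a
    rw [show (X + C a : ℝ[X]) = X - C (-a) by rw [map_neg, sub_neg_eq_add], roots_X_sub_C]
    simp
  have hroots : Multiset.card p.roots = p.natDegree := by
    rw [hdeg, hp, roots_prod _ _ (by rwa [← hp])]
    simp [Multiset.card_bind, hcard1, hm]
  -- iterated derivative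
  set q : ℝ[X] := derivative^[N-1] p with hq
  obtain ⟨hqdeg, hqroots⟩ := rr_iter p hroots (N-1) (by omega)
  have hqdeg' : q.natDegree = j + 1 := by rw [hqdeg, hdeg]; omega
  have hqroots' : Multiset.card q.roots = j + 1 := by rw [hqroots, hdeg]; omega
  have hqrr : Multiset.card q.roots = q.natDegree := by rw [hqroots', hqdeg']
  -- coefficients of q via esymm of its roots
  have hc : ∀ t : ℕ, t ≤ j + 1 → q.coeff t =
      q.leadingCoeff * (-1:ℝ)^(j+1-t) * q.roots.esymm (j+1-t) := by
    intro t ht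
    rw [coeff_eq_esymm_roots_of_card hqrr (by omega), hqdeg']
  -- base newton inequality on q.roots
  have hbase := newton_base (j-1) q.roots (by rw [hqroots']; omega)
  rw [show j - 1 + 2 = j + 1 from by omega, show j - 1 + 1 = j from by omega] at hbase
  have hcast : ((j-1 : ℕ) : ℝ) = (j:ℝ) - 1 := by
    rw [Nat.cast_sub h1]; norm_num
  rw [hcast] at hbase
  -- translate to coefficients of q
  set L := q.leadingCoeff with hL
  have hco0 : q.coeff 0 = L * (-1:ℝ)^(j+1) * q.roots.esymm (j+1) := by
    simpa using hc 0 (by omega)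
  have hco1 : q.coeff 1 = L * (-1:ℝ)^j * q.roots.esymm j := by
    have := hc 1 (by omega)
    rw [show j+1-1 = j from by omega] at this
    exact this
  have hco2 : q.coeff 2 = L * (-1:ℝ)^(j-1) * q.roots.esymm (j-1) := by
    have := hc 2 (by omega)
    rw [show j+1-2 = j-1 from by omega] at this
    exact this
  have hsign : ((-1:ℝ)^(j+1)) * ((-1:ℝ)^(j-1)) = 1 := by
    rw [← pow_add, show j+1+(j-1) = 2*j from by omega, pow_mul]
    norm_num
  have hsign2 : ((-1:ℝ)^j) * ((-1:ℝ)^j) = 1 := by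
    rw [← pow_add, ← two_mul, pow_mul]; norm_num
  have hqco : 2*((j:ℝ)+1) * (q.coeff 0 * q.coeff 2) ≤ (j:ℝ) * (q.coeff 1)^2 := by
    rw [hco0, hco1, hco2]
    have e1 : L * (-1:ℝ)^(j+1) * q.roots.esymm (j+1) * (L * (-1:ℝ)^(j-1) * q.roots.esymm (j-1))
        = L^2 * (q.roots.esymm (j+1) * q.roots.esymm (j-1)) := by
      have : L * (-1:ℝ)^(j+1) * q.roots.esymm (j+1) * (L * (-1:ℝ)^(j-1) * q.roots.esymm (j-1))
          = (((-1:ℝ)^(j+1)) * ((-1:ℝ)^(j-1))) * (L^2 * (q.roots.esymm (j+1) * q.roots.esymm (j-1))) := by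
        ring
      rw [this, hsign, one_mul]
    have e2 : (L * (-1:ℝ)^j * q.roots.esymm j)^2 = L^2 * (q.roots.esymm j)^2 := by
      have : (L * (-1:ℝ)^j * q.roots.esymm j)^2
          = (((-1:ℝ)^j) * ((-1:ℝ)^j)) * (L^2 * (q.roots.esymm j)^2) := by ring
      rw [this, hsign2, one_mul]
    rw [e1, e2]
    have hL2 : 0 ≤ L^2 := sq_nonneg L
    calc 2*((j:ℝ)+1) * (L^2 * (q.roots.esymm (j+1) * q.roots.esymm (j-1)))
        = L^2 * (2*(((j:ℝ)-1)+2) * (q.roots.esymm (j+1) * q.roots.esymm (j-1))) := by ring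
      _ ≤ L^2 * ((((j:ℝ)-1)+1) * (q.roots.esymm j)^2) := mul_le_mul_of_nonneg_left hbase hL2
      _ = (j:ℝ) * (L^2 * (q.roots.esymm j)^2) := by ring
  -- coefficients of q via p
  have hcoeff : ∀ t : ℕ, q.coeff t =
      ((t + (N-1)).descFactorial (N-1) : ℝ) * p.coeff (t + (N-1)) := by
    intro t
    rw [hq, Polynomial.coeff_iterate_derivative, nsmul_eq_mul]
  have hpc : ∀ u : ℕ, u ≤ m → p.coeff u = ∑ s ∈ A.powersetCard (m - u), ∏ i ∈ s, x i := by
    intro u hu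
    rw [hp, Finset.prod_X_add_C_coeff A x (by rwa [← hm])]
  set T1 := ∑ s ∈ A.powersetCard (j+1), ∏ i ∈ s, x i with hT1
  set T2 := ∑ s ∈ A.powersetCard j, ∏ i ∈ s, x i with hT2
  set T3 := ∑ s ∈ A.powersetCard (j-1), ∏ i ∈ s, x i with hT3
  have ht0 : q.coeff 0 = (((N-1).descFactorial (N-1) : ℕ) : ℝ) * T1 := by
    rw [hcoeff 0, show (0:ℕ) + (N-1) = N-1 from by omega, hpc (N-1) (by omega),
      show m - (N-1) = j+1 from by omega, hT1]
  have ht1 : q.coeff 1 = ((N.descFactorial (N-1) : ℕ) : ℝ) * T2 := by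
    rw [hcoeff 1, show (1:ℕ) + (N-1) = N from by omega, hpc N (by omega),
      show m - N = j from by omega, hT2]
  have ht2 : q.coeff 2 = (((N+1).descFactorial (N-1) : ℕ) : ℝ) * T3 := by
    rw [hcoeff 2, show (2:ℕ) + (N-1) = N+1 from by omega, hpc (N+1) (by omega),
      show m - (N+1) = j-1 from by omega, hT3]
  have hFpos : (0:ℝ) < (Nat.factorial (N-1) : ℝ) := by positivity
  have f0 : (((N-1).descFactorial (N-1) : ℕ) : ℝ) = (Nat.factorial (N-1) : ℝ) := by
    rw [Nat.descFactorial_self]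
  have hchoose1 : N.choose (N-1) = N := by
    have h := Nat.choose_symm (show 1 ≤ N from hN1)
    rw [Nat.choose_one_right] at h
    exact h
  have f1 : ((N.descFactorial (N-1) : ℕ) : ℝ) = (N:ℝ) * (Nat.factorial (N-1) : ℝ) := by
    rw [Nat.descFactorial_eq_factorial_mul_choose, hchoose1]
    push_cast
    ring
  have hsym : (N+1).choose (N-1) = (N+1).choose 2 := by
    rw [show N - 1 = (N+1) - 2 from by omega, Nat.choose_symm (by omega)]
  have h2c : 2 * ((N+1).choose 2) = (N+1) * N := by
    have h := Nat.add_one_mul_choose_eq N 1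
    rw [Nat.choose_one_right] at h
    rw [show (1:ℕ) + 1 = 2 from rfl] at h
    omega
  have hD2 : (((N+1).descFactorial (N-1) : ℕ) : ℝ)
      = ((N:ℝ)+1) * (N:ℝ) * (Nat.factorial (N-1) : ℝ) / 2 := by
    rw [Nat.descFactorial_eq_factorial_mul_choose, hsym]
    have : (((N+1).choose 2 : ℕ) : ℝ) = ((N:ℝ)+1) * (N:ℝ) / 2 := by
      have : ((2 * ((N+1).choose 2) : ℕ) : ℝ) = (((N+1) * N : ℕ) : ℝ) := by rw [h2c]
      push_cast at this
      linarith
    push_cast [this] at *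
    rw [this]
    ring
  rw [ht0, ht1, ht2, f0, f1, hD2] at hqco
  set Fc := (Nat.factorial (N-1) : ℝ) with hFc
  set G := (N:ℝ) * Fc^2 with hG
  have hGpos : 0 < G := by
    rw [hG]
    have : (0:ℝ) < (N:ℝ) := by exact_mod_cast hN1
    positivity
  have step : ((j:ℝ)+1)*((N:ℝ)+1)*(T1*T3) * G ≤ ((j:ℝ)*(N:ℝ)*T2^2) * G := by
    calc ((j:ℝ)+1)*((N:ℝ)+1)*(T1*T3) * G
        = 2*((j:ℝ)+1) * (Fc*T1 * ((((N:ℝ)+1) * (N:ℝ) * Fc / 2)*T3)) := by rw [hG]; ring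
      _ ≤ (j:ℝ) * ((N:ℝ)*Fc*T2)^2 := hqco
      _ = ((j:ℝ)*(N:ℝ)*T2^2) * G := by rw [hG]; ring
  have key := le_of_mul_le_mul_right step hGpos
  have hNc : ((N:ℕ):ℝ) = (m:ℝ) - (j:ℝ) := by
    rw [hN, Nat.cast_sub (by omega)]
  rw [hNc] at key
  calc ((j:ℝ)+1) * ((A.card:ℝ) - (j:ℝ) + 1) * (T1 * T3)
      = ((j:ℝ)+1)*(((m:ℝ) - (j:ℝ))+1)*(T1*T3) := by rw [← hm]
    _ ≤ (j:ℝ)*((m:ℝ) - (j:ℝ))*T2^2 := key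
    _ = (j:ℝ) * ((A.card:ℝ) - (j:ℝ)) * T2^2 := by rw [← hm]

lemma sum_pc_insert {ι : Type*} [DecidableEq ι] {B : Finset ι} {i : ι} (h : i ∉ B)
    (x : ι → ℝ) (j : ℕ) :
    ∑ s ∈ (insert i B).powersetCard (j+1), ∏ t ∈ s, x t
      = ∑ s ∈ B.powersetCard (j+1), ∏ t ∈ s, x t
        + x i * ∑ s ∈ B.powersetCard j, ∏ t ∈ s, x t := by
  rw [Finset.powersetCard_succ_insert h, Finset.sum_union, Finset.sum_image, Finset.mul_sum]
  · congr 1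
    refine Finset.sum_congr rfl fun s hs => ?_
    rw [Finset.mem_powersetCard] at hs
    rw [Finset.prod_insert (fun hi => h (hs.1 hi))]
  · intro s hs t ht hst
    rw [Finset.mem_coe, Finset.mem_powersetCard] at hs ht
    have hsi : i ∉ s := fun hi => h (hs.1 hi)
    have hti : i ∉ t := fun hi => h (ht.1 hi)
    have := congrArg (Finset.erase · i) hst
    simpa [Finset.erase_insert hsi, Finset.erase_insert hti] using this
  · rw [Finset.disjoint_left]
    intro s hs hs'
    rw [Finset.mem_powersetCard] at hs
    rw [Finset.mem_image] at hs'
    obtain ⟨t, ht, rfl⟩ := hs'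
    exact h (hs.1 (Finset.mem_insert_self i t))

lemma prodUpdateNotMem {ι : Type*} [DecidableEq ι] {s : Finset ι} {i : ι} (h : i ∉ s)
    (x : ι → ℝ) (a : ℝ) : ∏ t ∈ s, Function.update x i a t = ∏ t ∈ s, x t :=
  Finset.prod_congr rfl fun t ht => Function.update_of_ne (by rintro rfl; exact h ht) a x

lemma esymmR_update (n : ℕ) (x : Fin n → ℝ) (i : Fin n) (j : ℕ) :
    esymmR n j (Function.update x i 0)
      = ∑ s ∈ ((univ : Finset (Fin n)).erase i).powersetCard j, ∏ t ∈ s, x t := by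
  have key : ∀ (s : Finset (Fin n)), s ∈ ((univ : Finset (Fin n)).erase i).powersetCard j →
      ∏ t ∈ s, Function.update x i 0 t = ∏ t ∈ s, x t := by
    intro s hs
    rw [Finset.mem_powersetCard] at hs
    exact prodUpdateNotMem (fun hi => (Finset.mem_erase.1 (hs.1 hi)).1 rfl) x 0
  cases j with
  | zero =>
    simp [esymmR, Finset.powersetCard_zero]
  | succ j =>
    rw [esymmR]
    conv_lhs => rw [show (univ : Finset (Fin n)) = insert i (univ.erase i) from
      (Finset.insert_erase (mem_univ i)).symm]
    rw [sum_pc_insert (Finset.notMem_erase i univ) (Function.update x i 0) j]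
    rw [Function.update_self, zero_mul, add_zero]
    exact Finset.sum_congr rfl key

lemma esymmR_dec (n : ℕ) (x : Fin n → ℝ) (i : Fin n) (j : ℕ) :
    esymmR n (j+1) x
      = ∑ s ∈ ((univ : Finset (Fin n)).erase i).powersetCard (j+1), ∏ t ∈ s, x t
        + x i * ∑ s ∈ ((univ : Finset (Fin n)).erase i).powersetCard j, ∏ t ∈ s, x t := by
  rw [esymmR]
  conv_lhs => rw [show (univ : Finset (Fin n)) = insert i (univ.erase i) from
    (Finset.insert_erase (mem_univ i)).symm]
  rw [sum_pc_insert (Finset.notMem_erase i univ) x j]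

theorem gamma_pos (k : ℕ) : ∀ (n : ℕ) (x : Fin n → ℝ), x ∈ GardingCone n k →
    ∀ (i : Fin n) (j : ℕ), j + 1 ≤ k →
      0 < ∑ s ∈ ((univ : Finset (Fin n)).erase i).powersetCard j, ∏ t ∈ s, x t := by
  induction k using Nat.strong_induction_on with
  | _ k IH =>
  intro n x hx i j hjk
  cases j with
  | zero => simp [Finset.powersetCard_zero]
  | succ j =>
    -- k ≥ j + 2
    rcases lt_or_eq_of_le hjk with hlt | heq
    · -- j+1+1 ≤ k-1 branch: use IH at k-1
      have hk1 : 1 ≤ k - 1 := by omega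
      exact IH (k-1) (by omega) n x (fun t h1 h2 => hx t h1 (by omega)) i (j+1) (by omega)
    · -- j + 2 = k
      have hk : k = j + 2 := heq.symm
      subst hk
      set A := (univ : Finset (Fin n)).erase i with hA
      have hAcard : A.card = n - 1 := by
        rw [hA, Finset.card_erase_of_mem (mem_univ i), Finset.card_univ, Fintype.card_fin]
      have hin : (i : Fin n) ∈ (univ : Finset (Fin n)) := mem_univ i
      have hn1 : 1 ≤ n := by
        rcases Nat.eq_zero_or_pos n with h0 | h1
        · exact absurd (h0 ▸ i).2 (by omega)
        · exact h1
      set E0 := ∑ s ∈ A.powersetCard j, ∏ t ∈ s, x t with hE0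
      set E1 := ∑ s ∈ A.powersetCard (j+1), ∏ t ∈ s, x t with hE1
      set E2 := ∑ s ∈ A.powersetCard (j+2), ∏ t ∈ s, x t with hE2
      have hE0pos : 0 < E0 := IH (j+1) (by omega) n x (fun t h1 h2 => hx t h1 (by omega)) i j (by omega)
      by_contra hneg
      push_neg at hneg
      have hs1 : 0 < E1 + x i * E0 := by
        have := hx (j+1) (by omega) (by omega)
        rwa [esymmR_dec n x i j, ← hA, ← hE0, ← hE1] at this
      have hs2 : 0 < E2 + x i * E1 := by
        have := hx (j+2) (by omega) (by omega)
        rwa [esymmR_dec n x i (j+1), ← hA, ← hE1, ← hE2] at this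
      have hxi : 0 < x i := by
        by_contra hxn
        push_neg at hxn
        nlinarith [hs1, hneg, mul_nonneg (neg_nonneg.mpr hxn) hE0pos.le]
      have hE2pos : 0 < E2 := by nlinarith
      -- strict inequality E1^2 < E2 * E0
      have hstrict : E1^2 < E2 * E0 := by
        have ha : -E1 < x i * E0 := by linarith
        have hb : x i * (-E1) < E2 := by linarith
        nlinarith [mul_le_mul_of_nonneg_left (le_of_lt ha) (neg_nonneg.2 hneg),
          mul_lt_mul_of_pos_left hb hE0pos]
      -- Newton
      have hcardge : j + 2 ≤ A.card := by
        by_contra hcard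
        push_neg at hcard
        have : A.powersetCard (j+2) = ∅ := Finset.powersetCard_eq_empty.2 hcard
        rw [hE2, this] at hE2pos
        simp at hE2pos
      have hnewton := newton_ineq A x (j+1) (by omega) (by omega)
      simp only [show j+1+1 = j+2 from rfl, Nat.add_sub_cancel] at hnewton
      rw [← hE0, ← hE1, ← hE2] at hnewton
      push_cast at hnewton
      have hc1 : (1:ℝ) ≤ (A.card:ℝ) - ((j:ℝ)+1) := by
        have h' : ((j:ℝ) + 2) ≤ (A.card:ℝ) := by exact_mod_cast hcardge
        linarith
      nlinarith [mul_pos hE2pos hE0pos, hstrict, hnewton, hc1,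
        mul_lt_mul_of_pos_left hstrict (show (0:ℝ) < ((j:ℝ)+1)*((A.card:ℝ) - ((j:ℝ)+1)) by nlinarith)]

lemma chain_ineq (P : ℕ → ℝ) (l k : ℕ) (hl : 1 ≤ l) (hlk : l ≤ k)
    (hpos : ∀ j, l - 1 ≤ j → j ≤ k → 0 < P j)
    (hnewt : ∀ j, l ≤ j → j + 1 ≤ k → P (j+1) * P (j-1) ≤ P j ^ 2) :
    P k * P (l-1) ≤ P (k-1) * P l := by
  induction k, hlk using Nat.le_induction with
  | base =>
    exact le_of_eq (mul_comm _ _)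
  | succ k hk IH =>
    have IH' := IH (fun j h1 h2 => hpos j h1 (by omega)) (fun j h1 h2 => hnewt j h1 (by omega))
    have hNk := hnewt k (by omega) (by omega)
    have hPk : 0 < P k := hpos k (by omega) (by omega)
    have hPk1 : 0 < P (k-1) := hpos (k-1) (by omega) (by omega)
    have hPl1 : 0 < P (l-1) := hpos (l-1) (by omega) (by omega)
    rw [show k + 1 - 1 = k from by omega]
    refine (mul_le_mul_iff_of_pos_right hPk1).mp ?_
    have h1 : P (k+1) * P (k-1) * P (l-1) ≤ P k ^2 * P (l-1) :=
      mul_le_mul_of_nonneg_right hNk hPl1.le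
    have h2 : P k * (P k * P (l-1)) ≤ P k * (P (k-1) * P l) :=
      mul_le_mul_of_nonneg_left IH' hPk.le
    nlinarith [h1, h2]

set_option maxHeartbeats 1000000 in
/-- For `1 ≤ l < k ≤ n`, `λ ∈ Γ_k` and each index `i`:
`σ_l(λ)σ_{k-1;i}(λ) - σ_k(λ)σ_{l-1;i}(λ)
  = σ_{l;i}(λ)σ_{k-1;i}(λ) - σ_{k;i}(λ)σ_{l-1;i}(λ)
  ≥ (n(k-l)/(k(n-l))) σ_{l;i}(λ)σ_{k-1;i}(λ)`,
where `σ_{k;i}` denotes `σ_k` with the `i`-th entry replaced by `0`. -/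
theorem esymm_quotient_partial_bound (n k l : ℕ) (hl : 1 ≤ l) (hlk : l < k) (hkn : k ≤ n)
    (x : Fin n → ℝ) (hx : x ∈ GardingCone n k) (i : Fin n) :
    esymmR n l x * esymmR n (k - 1) (Function.update x i 0)
        - esymmR n k x * esymmR n (l - 1) (Function.update x i 0)
      = esymmR n l (Function.update x i 0) * esymmR n (k - 1) (Function.update x i 0)
        - esymmR n k (Function.update x i 0) * esymmR n (l - 1) (Function.update x i 0) ∧
    ((n : ℝ) * ((k : ℝ) - (l : ℝ)) / ((k : ℝ) * ((n : ℝ) - (l : ℝ))))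
        * esymmR n l (Function.update x i 0) * esymmR n (k - 1) (Function.update x i 0)
      ≤ esymmR n l x * esymmR n (k - 1) (Function.update x i 0)
        - esymmR n k x * esymmR n (l - 1) (Function.update x i 0) := by
  obtain ⟨k', rfl⟩ : ∃ k', k = k' + 1 := ⟨k - 1, by omega⟩
  obtain ⟨l', rfl⟩ : ∃ l', l = l' + 1 := ⟨l - 1, by omega⟩
  set A := (univ : Finset (Fin n)).erase i with hA
  set E : ℕ → ℝ := fun t => ∑ s ∈ A.powersetCard t, ∏ t ∈ s, x t with hE
  have hAcard : A.card = n - 1 := by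
    rw [hA, Finset.card_erase_of_mem (mem_univ i), Finset.card_univ, Fintype.card_fin]
  set m := n - 1 with hm
  have hup : ∀ t, esymmR n t (Function.update x i 0) = E t := fun t => esymmR_update n x i t
  have hdec : ∀ t, esymmR n (t+1) x = E (t+1) + x i * E t := fun t => esymmR_dec n x i t
  have hl'k' : l' < k' := by omega
  -- positivity
  have hEpos : ∀ t, t ≤ k' → 0 < E t := fun t ht =>
    gamma_pos (k'+1) n x hx i t (by omega)
  have hEl' : 0 < E l' := hEpos l' (by omega)
  have hEl1 : 0 < E (l'+1) := hEpos (l'+1) (by omega)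
  have hEk' : 0 < E k' := hEpos k' (by omega)
  -- the equality part
  have heq : esymmR n (l'+1) x * esymmR n (k'+1 - 1) (Function.update x i 0)
        - esymmR n (k'+1) x * esymmR n (l'+1 - 1) (Function.update x i 0)
      = esymmR n (l'+1) (Function.update x i 0) * esymmR n (k'+1 - 1) (Function.update x i 0)
        - esymmR n (k'+1) (Function.update x i 0) * esymmR n (l'+1 - 1) (Function.update x i 0) := by
    simp only [Nat.add_sub_cancel, hup, hdec]
    ring
  refine ⟨heq, ?_⟩
  rw [heq]
  simp only [Nat.add_sub_cancel, hup]
  -- it suffices to bound E (k'+1) * E l'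
  have hden : (0:ℝ) < ((k'+1 : ℕ):ℝ) * ((n:ℝ) - ((l'+1 : ℕ):ℝ)) := by
    have : ((l'+1 : ℕ):ℝ) + 1 ≤ (n:ℝ) := by exact_mod_cast (show l'+1+1 ≤ n by omega)
    push_cast
    push_cast at this
    nlinarith
  have hfinal : E (k'+1) * E l'
      ≤ (((l'+1 : ℕ):ℝ) * ((n:ℝ) - ((k'+1 : ℕ):ℝ)) / (((k'+1 : ℕ):ℝ) * ((n:ℝ) - ((l'+1 : ℕ):ℝ))))
        * (E (l'+1) * E k') := by
    rcases le_or_gt (E (k'+1)) 0 with hEk1 | hEk1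
    · -- top coefficient nonpositive: trivial
      have h1 : E (k'+1) * E l' ≤ 0 := mul_nonpos_of_nonpos_of_nonneg hEk1 hEl'.le
      have h2 : (0:ℝ) ≤ (((l'+1 : ℕ):ℝ) * ((n:ℝ) - ((k'+1 : ℕ):ℝ)) / (((k'+1 : ℕ):ℝ) * ((n:ℝ) - ((l'+1 : ℕ):ℝ)))) * (E (l'+1) * E k') := by
        apply mul_nonneg
        · apply div_nonneg
          · have : ((k'+1 : ℕ):ℝ) ≤ (n:ℝ) := by exact_mod_cast hkn
            push_cast
            push_cast at this
            nlinarith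
          · exact hden.le
        · positivity
      linarith
    · -- top coefficient positive: use the Newton--Maclaurin chain
      have hkm : k' + 1 ≤ m := by
        by_contra hcard
        push_neg at hcard
        have hemp : A.powersetCard (k'+1) = ∅ :=
          Finset.powersetCard_eq_empty.2 (by omega)
        rw [hE] at hEk1
        simp only at hEk1
        rw [hemp] at hEk1
        simp at hEk1
      have hchoosepos : ∀ t, t ≤ m → (0:ℝ) < (Nat.choose m t : ℝ) := by
        intro t ht
        exact_mod_cast Nat.choose_pos ht
      set P : ℕ → ℝ := fun t => E t / (Nat.choose m t : ℝ) with hP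
      have hPpos : ∀ t, l' + 1 - 1 ≤ t → t ≤ k' + 1 → 0 < P t := by
        intro t _ ht2
        apply div_pos _ (hchoosepos t (by omega))
        rcases lt_or_eq_of_le ht2 with h | h
        · exact hEpos t (by omega)
        · rw [h]; exact hEk1
      have hPnewt : ∀ t, l' + 1 ≤ t → t + 1 ≤ k' + 1 → P (t+1) * P (t-1) ≤ P t ^ 2 := by
        intro t ht1 ht2
        have htm : t + 1 ≤ m := by omega
        have hW := newton_ineq A x t (by omega) (by rw [hAcard]; omega)
        rw [hAcard] at hW
        have hCpos : (0:ℝ) < (Nat.choose m (t+1) : ℝ) := hchoosepos _ (by omega)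
        have hCneg : (0:ℝ) < (Nat.choose m (t-1) : ℝ) := hchoosepos _ (by omega)
        have hC : (0:ℝ) < (Nat.choose m t : ℝ) := hchoosepos _ (by omega)
        rw [hP]
        simp only
        rw [div_mul_div_comm, div_pow, div_le_div_iff₀ (mul_pos hCpos hCneg) (by positivity)]
        -- goal : E (t+1) * E (t-1) * (C t)^2 ≤ E t ^2 * (C (t+1) * C (t-1))
        have id1 : ((t:ℝ)+1) * (Nat.choose m (t+1) : ℝ) = ((m:ℝ) - t) * (Nat.choose m t : ℝ) := by
          have h := Nat.choose_succ_right_eq m t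
          have hc : ((Nat.choose m (t+1) * (t+1) : ℕ) : ℝ) = ((Nat.choose m t * (m - t) : ℕ) : ℝ) := by
            rw [h]
          push_cast [Nat.cast_sub (show t ≤ m by omega)] at hc
          linarith
        have id2 : (t:ℝ) * (Nat.choose m t : ℝ) = ((m:ℝ) - t + 1) * (Nat.choose m (t-1) : ℝ) := by
          have h := Nat.choose_succ_right_eq m (t-1)
          rw [show t - 1 + 1 = t from by omega] at h
          have hc : ((Nat.choose m t * t : ℕ) : ℝ) = ((Nat.choose m (t-1) * (m - (t-1)) : ℕ) : ℝ) := by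
            rw [h]
          push_cast [Nat.cast_sub (show t - 1 ≤ m by omega),
            Nat.cast_sub (show 1 ≤ t by omega)] at hc
          linarith
        -- multiply Newton by C(t+1)*C(t-1) and use identities
        have hmul := mul_le_mul_of_nonneg_right hW
          (mul_nonneg hCpos.le hCneg.le)
        have hid : ((t:ℝ)+1) * ((m:ℝ) - t + 1) * ((Nat.choose m (t+1) : ℝ) * (Nat.choose m (t-1) : ℝ))
            = (t:ℝ) * ((m:ℝ) - t) * (Nat.choose m t : ℝ)^2 := by
          calc ((t:ℝ)+1) * ((m:ℝ) - t + 1) * ((Nat.choose m (t+1) : ℝ) * (Nat.choose m (t-1) : ℝ))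
              = (((t:ℝ)+1) * (Nat.choose m (t+1) : ℝ)) * (((m:ℝ) - t + 1) * (Nat.choose m (t-1) : ℝ)) := by
                ring
            _ = (((m:ℝ) - t) * (Nat.choose m t : ℝ)) * ((t:ℝ) * (Nat.choose m t : ℝ)) := by
                rw [id1, ← id2]
            _ = (t:ℝ) * ((m:ℝ) - t) * (Nat.choose m t : ℝ)^2 := by ring
        have htpos : (0:ℝ) < (t:ℝ) * ((m:ℝ) - t) := by
          have h1 : (1:ℝ) ≤ (t:ℝ) := by exact_mod_cast (show 1 ≤ t by omega)
          have h2 : (t:ℝ) + 1 ≤ (m:ℝ) := by exact_mod_cast htm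
          nlinarith
        refine le_of_mul_le_mul_left ?_ htpos
        calc (t:ℝ) * ((m:ℝ) - t) * (E (t+1) * E (t-1) * (Nat.choose m t : ℝ)^2)
            = ((t:ℝ)+1) * ((m:ℝ) - t + 1) *
                ((E (t+1)) * (E (t-1))) * ((Nat.choose m (t+1) : ℝ) * (Nat.choose m (t-1) : ℝ)) := by
              linear_combination (-(E (t+1) * E (t-1))) * hid
          _ ≤ (t:ℝ) * ((m:ℝ) - t) * (E t)^2 * ((Nat.choose m (t+1) : ℝ) * (Nat.choose m (t-1) : ℝ)) := hmul
          _ = (t:ℝ) * ((m:ℝ) - t) * ((E t)^2 * ((Nat.choose m (t+1) : ℝ) * (Nat.choose m (t-1) : ℝ))) := by ring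
      have hchain := chain_ineq P (l'+1) (k'+1) (by omega) (by omega) hPpos hPnewt
      simp only [Nat.add_sub_cancel] at hchain
      rw [hP] at hchain
      simp only at hchain
      rw [div_mul_div_comm, div_mul_div_comm, div_le_div_iff₀
        (mul_pos (hchoosepos (k'+1) (by omega)) (hchoosepos l' (by omega)))
        (mul_pos (hchoosepos k' (by omega)) (hchoosepos (l'+1) (by omega)))] at hchain
      -- hchain : E (k'+1) * E l' * (C k' * C (l'+1)) ≤ E k' * E (l'+1) * (C (k'+1) * C l')
      have hn1 : 1 ≤ n := by omega
      have hmr : (m:ℝ) = (n:ℝ) - 1 := by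
        rw [hm, Nat.cast_sub hn1, Nat.cast_one]
      have idK : ((k'+1 : ℕ):ℝ) * (Nat.choose m (k'+1) : ℝ)
          = ((n:ℝ) - ((k'+1 : ℕ):ℝ)) * (Nat.choose m k' : ℝ) := by
        have h := Nat.choose_succ_right_eq m k'
        have hc : ((Nat.choose m (k'+1) * (k'+1) : ℕ) : ℝ) = ((Nat.choose m k' * (m - k') : ℕ) : ℝ) := by
          rw [h]
        push_cast [Nat.cast_sub (show k' ≤ m by omega)] at hc
        push_cast
        rw [hmr] at hc
        linarith
      have idL : ((l'+1 : ℕ):ℝ) * (Nat.choose m (l'+1) : ℝ)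
          = ((n:ℝ) - ((l'+1 : ℕ):ℝ)) * (Nat.choose m l' : ℝ) := by
        have h := Nat.choose_succ_right_eq m l'
        have hc : ((Nat.choose m (l'+1) * (l'+1) : ℕ) : ℝ) = ((Nat.choose m l' * (m - l') : ℕ) : ℝ) := by
          rw [h]
        push_cast [Nat.cast_sub (show l' ≤ m by omega)] at hc
        push_cast
        rw [hmr] at hc
        linarith
      rw [div_mul_eq_mul_div, le_div_iff₀ hden]
      refine le_of_mul_le_mul_right ?_
        (mul_pos (hchoosepos k' (by omega)) (hchoosepos (l'+1) (by omega)))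
      calc E (k'+1) * E l' * (((k'+1 : ℕ):ℝ) * ((n:ℝ) - ((l'+1 : ℕ):ℝ)))
            * ((Nat.choose m k' : ℝ) * (Nat.choose m (l'+1) : ℝ))
          = (E (k'+1) * E l' * ((Nat.choose m k' : ℝ) * (Nat.choose m (l'+1) : ℝ)))
            * (((k'+1 : ℕ):ℝ) * ((n:ℝ) - ((l'+1 : ℕ):ℝ))) := by ring
        _ ≤ (E k' * E (l'+1) * ((Nat.choose m (k'+1) : ℝ) * (Nat.choose m l' : ℝ)))
            * (((k'+1 : ℕ):ℝ) * ((n:ℝ) - ((l'+1 : ℕ):ℝ))) :=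
            mul_le_mul_of_nonneg_right hchain hden.le
        _ = ((l'+1 : ℕ):ℝ) * ((n:ℝ) - ((k'+1 : ℕ):ℝ)) * (E (l'+1) * E k')
            * ((Nat.choose m k' : ℝ) * (Nat.choose m (l'+1) : ℝ)) := by
            linear_combination (E k' * E (l'+1) * ((n:ℝ) - ((l'+1 : ℕ):ℝ)) * (Nat.choose m l' : ℝ)) * idK
              - (E k' * E (l'+1) * ((n:ℝ) - ((k'+1 : ℕ):ℝ)) * (Nat.choose m k' : ℝ)) * idL
  -- conclude from hfinal
  have hq : ((n : ℝ) * (((k'+1 : ℕ):ℝ) - ((l'+1 : ℕ):ℝ)) / (((k'+1 : ℕ):ℝ) * ((n : ℝ) - ((l'+1 : ℕ):ℝ))))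
      = 1 - (((l'+1 : ℕ):ℝ) * ((n:ℝ) - ((k'+1 : ℕ):ℝ)) / (((k'+1 : ℕ):ℝ) * ((n:ℝ) - ((l'+1 : ℕ):ℝ)))) := by
    rw [eq_sub_iff_add_eq, ← add_div, div_eq_one_iff_eq hden.ne']
    push_cast
    ring
  rw [hq]
  nlinarith [hfinal, mul_pos hEl1 hEk']
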